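/- arXiv:1607.00088 — 2 statements merged into one kernel-verified Lean document; each statement's English description precedes it below -/
import Mathlib

section
/- For every positive integer n, the number of integer pairs (x,y) with x² + 2y² = n equals 2·∑_{d|n} (−2/d), where (−2/d) denotes the Kronecker symbol. -/
set_option synthInstance.maxHeartbeats 1000000
set_option maxHeartbeats 1000000

/-- The Kronecker symbol `(-2/d)` for natural numbers `d`. -/
def chiNeg2 (d : ℕ) : ℤ :=
  if d % 8 = 1 ∨ d % 8 = 3 then 1
  else if d % 8 = 5 ∨ d % 8 = 7 then -1
  else 0

open Zsqrtd

local notation "R" => Zsqrtd (-2)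

namespace Zm2

theorem norm_eq (z : R) : z.norm = z.re ^ 2 + 2 * z.im ^ 2 := by
  rw [Zsqrtd.norm_def]; ring

theorem norm_nonneg' (z : R) : 0 ≤ z.norm := Zsqrtd.norm_nonneg (by norm_num) z

theorem norm_eq_zero' {z : R} : z.norm = 0 ↔ z = 0 := Zsqrtd.norm_eq_zero_iff (by norm_num) z

theorem norm_pos' {z : R} (hz : z ≠ 0) : 0 < z.norm :=
  (norm_nonneg' z).lt_of_ne (fun h => hz (norm_eq_zero'.mp h.symm))

noncomputable instance : Div R :=
  ⟨fun x y =>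
    let n := (Zsqrtd.norm y : ℚ)
    let c := star y
    ⟨round (((x * c).re : ℚ) / n), round (((x * c).im : ℚ) / n)⟩⟩

theorem div_def (x y : R) :
    x / y = ⟨round (((x * star y).re : ℚ) / (y.norm : ℚ)),
             round (((x * star y).im : ℚ) / (y.norm : ℚ))⟩ := rfl

noncomputable instance : Mod R := ⟨fun x y => x - y * (x / y)⟩

theorem mod_def (x y : R) : x % y = x - y * (x / y) := rfl

theorem round_bound (a : ℤ) {n : ℤ} (hn : 0 < n) :
    2 * |a - n * round ((a : ℚ) / n)| ≤ n := by
  have hnq : (0 : ℚ) < (n : ℚ) := by exact_mod_cast hn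
  have h := abs_sub_round ((a : ℚ) / n)
  have : |(a : ℚ) - n * round ((a : ℚ) / n)| ≤ n / 2 := by
    have heq : (a : ℚ) - n * round ((a : ℚ) / n) = n * ((a : ℚ) / n - round ((a : ℚ) / n)) := by
      field_simp
    calc |(a : ℚ) - n * round ((a : ℚ) / n)| = (n : ℚ) * |(a : ℚ) / n - round ((a : ℚ) / n)| := by
            rw [heq, abs_mul, abs_of_pos hnq]
      _ ≤ (n : ℚ) * (1 / 2) := mul_le_mul_of_nonneg_left h (le_of_lt hnq)
      _ = n / 2 := by ring
  have h2 : (2 : ℚ) * |(a : ℚ) - n * round ((a : ℚ) / n)| ≤ n := by linarith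
  exact_mod_cast (by push_cast; exact h2 :
    ((2 * |a - n * round ((a : ℚ) / n)| : ℤ) : ℚ) ≤ (n : ℚ))

theorem norm_mod_lt (x : R) {y : R} (hy : y ≠ 0) : (x % y).norm < y.norm := by
  have hn : 0 < y.norm := norm_pos' hy
  set n := y.norm with hndef
  set q := x * star y with hq
  set z := x / y with hz
  have hzre : z.re = round ((q.re : ℚ) / n) := by rw [hz, div_def]
  have hzim : z.im = round ((q.im : ℚ) / n) := by rw [hz, div_def]
  -- key: n * norm (x % y) = norm (q - n • z)
  have key : n * (x % y).norm = (q - (n : R) * z).norm := by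
    have : q - (n : R) * z = star y * (x % y) := by
      rw [mod_def, hq]
      have : ((n : ℤ) : R) = y * star y := by
        rw [hndef, Zsqrtd.norm_eq_mul_conj]
      rw [this]; ring
    rw [this, Zsqrtd.norm_mul, Zsqrtd.norm_conj, hndef]
  have hre : 2 * |q.re - n * z.re| ≤ n := by rw [hzre]; exact round_bound q.re hn
  have him : 2 * |q.im - n * z.im| ≤ n := by rw [hzim]; exact round_bound q.im hn
  have hnormval : (q - (n : R) * z).norm = (q.re - n * z.re) ^ 2 + 2 * (q.im - n * z.im) ^ 2 := by
    rw [norm_eq]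
    congr 2 <;> simp [Zsqrtd.re_sub, Zsqrtd.im_sub, Zsqrtd.re_mul, Zsqrtd.im_mul] <;> ring
  have h4 : 4 * (q - (n : R) * z).norm ≤ 3 * n ^ 2 := by
    rw [hnormval]
    have h1 : (2 * |q.re - n * z.re|) ^ 2 ≤ n ^ 2 := by
      apply sq_le_sq' <;> nlinarith [abs_nonneg (q.re - n * z.re)]
    have h2 : (2 * |q.im - n * z.im|) ^ 2 ≤ n ^ 2 := by
      apply sq_le_sq' <;> nlinarith [abs_nonneg (q.im - n * z.im)]
    rw [mul_pow] at h1 h2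
    rw [sq_abs] at h1 h2
    nlinarith
  nlinarith [norm_nonneg' (x % y), key]

theorem natAbs_norm_mod_lt (x : R) {y : R} (hy : y ≠ 0) :
    (x % y).norm.natAbs < y.norm.natAbs := by
  have := norm_mod_lt x hy
  have h1 := norm_nonneg' (x % y)
  have h2 := norm_nonneg' y
  omega

noncomputable instance : EuclideanDomain R :=
  { Zsqrtd.commRing, (inferInstance : Nontrivial R) with
    quotient := (· / ·)
    remainder := (· % ·)
    quotient_zero := fun x => by
      simp [div_def, Zsqrtd.norm_zero]; rfl
    quotient_mul_add_remainder_eq := fun x y => by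
      show y * (x / y) + (x - y * (x / y)) = x; ring
    r := fun a b => a.norm.natAbs < b.norm.natAbs
    r_wellFounded := (measure (Int.natAbs ∘ Zsqrtd.norm)).wf
    remainder_lt := fun a b hb => natAbs_norm_mod_lt a hb
    mul_left_not_lt := fun a b hb0 => by
      apply not_lt_of_ge
      rw [Zsqrtd.norm_mul, Int.natAbs_mul]
      exact le_mul_of_one_le_right (Nat.zero_le _)
        (by have := norm_pos' hb0; omega) }




theorem isUnit_iff {z : R} : IsUnit z ↔ z = 1 ∨ z = -1 := by
  constructor
  · intro h
    have h1 : z.norm = 1 := (Zsqrtd.norm_eq_one_iff' (by norm_num) z).mpr h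
    rw [norm_eq] at h1
    have him : z.im = 0 := by nlinarith [sq_nonneg z.re, sq_nonneg z.im]
    have hre : z.re = 1 ∨ z.re = -1 := by
      rw [him] at h1
      exact mul_self_eq_one_iff.mp (by nlinarith)
    rcases hre with h | h
    · left; ext <;> simp [h, him]
    · right; ext <;> simp [h, him]
  · rintro (rfl | rfl)
    · exact isUnit_one
    · exact IsUnit.neg isUnit_one

/-- The solution set. -/
def S (n : ℕ) : Set R := {z | z.norm = n}

noncomputable def f (n : ℕ) : ℕ := Nat.card (S n)

theorem S_one : S 1 = {1, -1} := by
  ext z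
  simp only [S, Set.mem_setOf_eq, Set.mem_insert_iff, Set.mem_singleton_iff]
  constructor
  · intro h
    have : IsUnit z := (Zsqrtd.norm_eq_one_iff' (by norm_num) z).mp (by exact_mod_cast h)
    exact isUnit_iff.mp this
  · rintro (rfl | rfl) <;> simp [Zsqrtd.norm_one, Zsqrtd.norm_neg]

theorem f_one : f 1 = 2 := by
  rw [f, S_one, Nat.card_coe_set_eq, Set.ncard_pair (by decide : (1 : R) ≠ -1)]

/-- Reduction at 2: `S (2*m) ≃ S m`. -/
theorem f_two_mul (m : ℕ) : f (2 * m) = f m := by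
  apply Nat.card_congr
  refine Equiv.symm (Equiv.ofBijective (fun z => ⟨⟨2 * (z : R).im, (z : R).re⟩, ?_⟩) ⟨?_, ?_⟩)
  · obtain ⟨z, hz⟩ := z
    simp only [S, Set.mem_setOf_eq] at hz
    show Zsqrtd.norm ⟨2 * z.im, z.re⟩ = ((2 * m : ℕ) : ℤ)
    rw [norm_eq] at hz ⊢
    push_cast at hz ⊢
    ring_nf
    ring_nf at hz
    linarith
  · rintro ⟨a, ha⟩ ⟨b, hb⟩ h
    simp only [Subtype.mk.injEq, Zsqrtd.ext_iff] at h ⊢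
    obtain ⟨h1, h2⟩ := h
    exact ⟨h2, by omega⟩
  · rintro ⟨z, hz⟩
    simp only [S, Set.mem_setOf_eq, norm_eq] at hz
    have hx : 2 ∣ z.re := by
      have h2 : (2 : ℤ) ∣ z.re ^ 2 := ⟨(m : ℤ) - z.im ^ 2, by push_cast at hz ⊢; linarith⟩
      exact Int.Prime.dvd_pow' Nat.prime_two h2
    obtain ⟨c, hc⟩ := hx
    refine ⟨⟨⟨z.im, c⟩, ?_⟩, ?_⟩
    · simp only [S, Set.mem_setOf_eq, norm_eq]
      rw [hc] at hz
      push_cast at hz ⊢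
      nlinarith [hz]
    · simp only [Subtype.mk.injEq, Zsqrtd.ext_iff]
      constructor <;> simp [hc]

/-- For a prime `p ≡ 5, 7 (mod 8)`, `-2` is not a square mod `p`,
so `p` dividing a norm forces `p` to divide both coordinates. -/
theorem inert_dvd {p : ℕ} (hp : p.Prime) (hp8 : p % 8 = 5 ∨ p % 8 = 7)
    {x y : ℤ} (h : (p : ℤ) ∣ x ^ 2 + 2 * y ^ 2) : (p : ℤ) ∣ x ∧ (p : ℤ) ∣ y := by
  haveI : Fact p.Prime := ⟨hp⟩
  have hp2 : p ≠ 2 := by rintro rfl; omega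
  have hns : ¬ IsSquare (-2 : ZMod p) := by
    rw [ZMod.exists_sq_eq_neg_two_iff hp2]
    omega
  have hcast : (x : ZMod p) ^ 2 + 2 * (y : ZMod p) ^ 2 = 0 := by
    have : ((x ^ 2 + 2 * y ^ 2 : ℤ) : ZMod p) = 0 := by
      rw [ZMod.intCast_zmod_eq_zero_iff_dvd]; exact h
    push_cast at this; linear_combination this
  have hy : (y : ZMod p) = 0 := by
    by_contra hy0
    apply hns
    have hyu : (y : ZMod p) * (y : ZMod p)⁻¹ = 1 := ZMod.mul_inv_of_unit _ (Ne.isUnit hy0)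
    have hx2 : (x : ZMod p) ^ 2 = -2 * (y : ZMod p) ^ 2 := by linear_combination hcast
    have hsq : ((x : ZMod p) * (y : ZMod p)⁻¹) * ((x : ZMod p) * (y : ZMod p)⁻¹) = -2 := by
      calc ((x : ZMod p) * (y : ZMod p)⁻¹) * ((x : ZMod p) * (y : ZMod p)⁻¹)
          = (x : ZMod p) ^ 2 * ((y : ZMod p)⁻¹) ^ 2 := by ring
        _ = -2 * ((y : ZMod p) * (y : ZMod p)⁻¹) ^ 2 := by rw [hx2]; ring
        _ = -2 := by rw [hyu]; ring
    exact ⟨(x : ZMod p) * (y : ZMod p)⁻¹, hsq.symm⟩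
  have hx : (x : ZMod p) = 0 := by
    rw [hy] at hcast
    have : (x : ZMod p) ^ 2 = 0 := by linear_combination hcast
    exact pow_eq_zero_iff (by norm_num) |>.mp this
  constructor
  · rwa [← ZMod.intCast_zmod_eq_zero_iff_dvd]
  · rwa [← ZMod.intCast_zmod_eq_zero_iff_dvd]

theorem inert_dvd_z {p : ℕ} (hp : p.Prime) (hp8 : p % 8 = 5 ∨ p % 8 = 7)
    {z : R} {n : ℕ} (hz : z ∈ S n) (hpn : p ∣ n) : (p : ℤ) ∣ z.re ∧ (p : ℤ) ∣ z.im := by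
  apply inert_dvd hp hp8
  simp only [S, Set.mem_setOf_eq, norm_eq] at hz
  rw [hz]
  exact_mod_cast Int.natCast_dvd_natCast.mpr hpn

theorem S_empty_of_inert {p n : ℕ} (hp : p.Prime) (hp8 : p % 8 = 5 ∨ p % 8 = 7)
    (hpn : p ∣ n) (hp2n : ¬ p ^ 2 ∣ n) : S n = ∅ := by
  ext z
  simp only [Set.mem_empty_iff_false, iff_false]
  intro hz
  obtain ⟨hx, hy⟩ := inert_dvd_z hp hp8 hz hpn
  apply hp2n
  have : ((p : ℤ)) ^ 2 ∣ (n : ℤ) := by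
    simp only [S, Set.mem_setOf_eq, norm_eq] at hz
    rw [← hz]
    obtain ⟨a, ha⟩ := hx; obtain ⟨b, hb⟩ := hy
    exact ⟨a ^ 2 + 2 * b ^ 2, by rw [ha, hb]; ring⟩
  exact_mod_cast Int.natCast_dvd_natCast.mp (by push_cast at this ⊢; exact_mod_cast this)

theorem f_inert_sq {p : ℕ} (hp : p.Prime) (hp8 : p % 8 = 5 ∨ p % 8 = 7) (m : ℕ) :
    f (p ^ 2 * m) = f m := by
  apply Nat.card_congr
  have hp0 : (p : ℤ) ≠ 0 := by exact_mod_cast hp.ne_zero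
  refine Equiv.symm (Equiv.ofBijective (fun z => ⟨(p : R) * z, ?_⟩) ⟨?_, ?_⟩)
  · obtain ⟨z, hz⟩ := z
    simp only [S, Set.mem_setOf_eq] at hz ⊢
    rw [Zsqrtd.norm_mul, Zsqrtd.norm_natCast, hz]
    push_cast; ring
  · rintro ⟨a, ha⟩ ⟨b, hb⟩ h
    simp only [Subtype.mk.injEq] at h ⊢
    exact mul_left_cancel₀ (by exact_mod_cast hp.ne_zero : (p : R) ≠ 0) h
  · rintro ⟨z, hz⟩
    obtain ⟨hx, hy⟩ := inert_dvd_z hp hp8 hz ⟨p * m, by ring⟩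
    obtain ⟨a, ha⟩ := hx; obtain ⟨b, hb⟩ := hy
    have hzw : z = (p : R) * ⟨a, b⟩ := by
      ext <;> simp [ha, hb, Zsqrtd.re_mul, Zsqrtd.im_mul]
    refine ⟨⟨⟨a, b⟩, ?_⟩, by simp [hzw]⟩
    simp only [S, Set.mem_setOf_eq] at hz ⊢
    have : (p : ℤ) * (p : ℤ) * Zsqrtd.norm (⟨a, b⟩ : R) = (p : ℤ) * (p : ℤ) * m := by
      have := hz
      rw [hzw, Zsqrtd.norm_mul, Zsqrtd.norm_natCast] at this
      rw [this]; push_cast; ring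
    exact mul_left_cancel₀ (by positivity) this

theorem not_prime_cast {p : ℕ} (hp : p.Prime) (hp8 : p % 8 = 1 ∨ p % 8 = 3) :
    ¬ Prime (p : R) := by
  haveI : Fact p.Prime := ⟨hp⟩
  have hp2 : p ≠ 2 := by omega
  obtain ⟨s, hs⟩ := (ZMod.exists_sq_eq_neg_two_iff hp2).mpr hp8
  have hdvd : (p : ℤ) ∣ (s.val : ℤ) ^ 2 + 2 := by
    rw [← ZMod.intCast_zmod_eq_zero_iff_dvd]
    push_cast
    rw [ZMod.natCast_val, ZMod.cast_id]
    linear_combination -hs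
  set t : ℤ := (s.val : ℤ) with ht
  intro hpr
  have hmul : (⟨t, 1⟩ : R) * ⟨t, -1⟩ = ((t ^ 2 + 2 : ℤ) : R) := by
    have h2 : ((t ^ 2 + 2 : ℤ) : R) = ⟨t ^ 2 + 2, 0⟩ := by
      ext <;> simp only [Zsqrtd.re_intCast, Zsqrtd.im_intCast]
    rw [h2]
    ext <;> simp [Zsqrtd.re_mul, Zsqrtd.im_mul] <;> ring
  have hd2 : (p : R) ∣ (⟨t, 1⟩ : R) * ⟨t, -1⟩ := by
    rw [hmul]
    obtain ⟨c, hc⟩ := hdvd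
    exact ⟨(c : R), by rw [hc]; push_cast; ring⟩
  have him : ∀ w : R, ((p : R) * w).im = p * w.im := by
    intro w; simp [Zsqrtd.im_mul]
  have hple := hp.one_lt
  rcases hpr.2.2 _ _ hd2 with ⟨w, hw⟩ | ⟨w, hw⟩
  · have h1 : (1 : ℤ) = p * w.im := by
      have := congrArg Zsqrtd.im hw
      rwa [him] at this
    have : (p : ℤ) ∣ 1 := ⟨w.im, h1⟩
    have := Int.le_of_dvd one_pos this
    omega
  · have h1 : (-1 : ℤ) = p * w.im := by
      have := congrArg Zsqrtd.im hw
      rwa [him] at this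
    have : (p : ℤ) ∣ 1 := ⟨-w.im, by linarith⟩
    have := Int.le_of_dvd one_pos this
    omega

theorem exists_norm_prime {p : ℕ} (hp : p.Prime) (hp8 : p % 8 = 1 ∨ p % 8 = 3) :
    ∃ π : R, π.norm = p := by
  have hnp := not_prime_cast hp hp8
  have hple := hp.one_lt
  have hp0 : (p : R) ≠ 0 := by
    simpa using hp.ne_zero
  have hpu : ¬ IsUnit (p : R) := by
    rw [isUnit_iff]
    rintro (h | h)
    · have h1 : ((p : ℕ) : ℤ) = 1 := by
        have := congrArg Zsqrtd.re h; simpa using this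
      omega
    · have h1 : ((p : ℕ) : ℤ) = -1 := by
        have := congrArg Zsqrtd.re h; simpa using this
      omega
  have hirr : ¬ Irreducible (p : R) := fun h => hnp (_root_.irreducible_iff_prime.mp h)
  rw [irreducible_iff] at hirr
  push_neg at hirr
  obtain ⟨a, b, hab, hua, hub⟩ := hirr hpu
  have hnorm : a.norm * b.norm = (p : ℤ) * (p : ℤ) := by
    rw [← Zsqrtd.norm_mul, ← hab, Zsqrtd.norm_natCast]
  have hna : a.norm.natAbs * b.norm.natAbs = p ^ 2 := by
    have := congrArg Int.natAbs hnorm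
    rwa [Int.natAbs_mul, Int.natAbs_mul, Int.natAbs_natCast, ← sq] at this
  have hna1 : a.norm.natAbs ≠ 1 := fun h => hua (Zsqrtd.norm_eq_one_iff.mp h)
  have hnb1 : b.norm.natAbs ≠ 1 := fun h => hub (Zsqrtd.norm_eq_one_iff.mp h)
  have heq := (Nat.Prime.mul_eq_prime_sq_iff hp hna1 hnb1).mp hna
  refine ⟨a, ?_⟩
  have h1 := heq.1
  have hnn := Zsqrtd.norm_nonneg (by norm_num : (-2 : ℤ) ≤ 0) a
  omega


theorem norm_pow (x : R) (n : ℕ) : (x ^ n).norm = x.norm ^ n := by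
  induction n with
  | zero => simp [Zsqrtd.norm_one]
  | succ k ih => rw [pow_succ, pow_succ, Zsqrtd.norm_mul, ih]

theorem prime_of_norm_prime {π : R} {p : ℕ} (hp : p.Prime) (h : π.norm = p) : Prime π := by
  rw [← _root_.irreducible_iff_prime]
  constructor
  · intro hu
    have h1 := Zsqrtd.norm_eq_one_iff.mpr hu
    rw [h] at h1
    simp only [Int.natAbs_natCast] at h1
    exact hp.one_lt.ne' h1
  · intro a b hab
    have hnorm : a.norm.natAbs * b.norm.natAbs = p := by
      have : (a * b).norm = p := by rw [← hab, h]
      have h2 := congrArg Int.natAbs (Zsqrtd.norm_mul a b)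
      rw [this] at h2
      simp only [Int.natAbs_mul] at h2
      omega
    rcases (Nat.Prime.eq_one_or_self_of_dvd hp _ ⟨b.norm.natAbs, hnorm.symm⟩) with h1 | h1
    · exact Or.inl (Zsqrtd.norm_eq_one_iff.mp h1)
    · right
      apply Zsqrtd.norm_eq_one_iff.mp
      rw [h1] at hnorm
      exact Nat.eq_of_mul_eq_mul_left hp.pos (hnorm.trans (mul_one p).symm)

theorem not_dvd_conj {π : R} {p : ℕ} (hp : p.Prime) (hp8 : p % 8 = 1 ∨ p % 8 = 3)
    (h : π.norm = p) : ¬ π ∣ star π := by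
  intro hdvd
  have hdvd' : star π ∣ π := by
    obtain ⟨c, hc⟩ := hdvd
    refine ⟨star c, ?_⟩
    conv_lhs => rw [← star_star π]
    rw [hc, star_mul', hc]
  obtain ⟨u, hu⟩ := associated_of_dvd_dvd hdvd hdvd'
  have huu : (u : R) = 1 ∨ (u : R) = -1 := isUnit_iff.mp u.isUnit
  rcases huu with huu | huu
  · -- star π = π : π real, norm = re², contradiction with primality
    rw [huu, mul_one] at hu
    have him : π.im = 0 := by
      have := congrArg Zsqrtd.im hu
      simp [Zsqrtd.im_star] at this
      omega
    have hsq : π.re * π.re = (p : ℤ) := by rw [← h, norm_eq, him]; ring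
    have hk : π.re.natAbs * π.re.natAbs = p := by
      have := congrArg Int.natAbs hsq
      rwa [Int.natAbs_mul, Int.natAbs_natCast] at this
    have hp1 := hp.one_lt
    rcases hp.eq_one_or_self_of_dvd _ ⟨π.re.natAbs, hk.symm⟩ with h1 | h1
    · rw [h1] at hk; omega
    · rw [h1] at hk; nlinarith
  · -- star π = -π : π purely imaginary, norm = 2im², p even, contradiction
    rw [huu, mul_neg_one] at hu
    have hre : π.re = 0 := by
      have := congrArg Zsqrtd.re hu
      simp [Zsqrtd.re_star] at this
      omega
    have h2 : (2 : ℤ) ∣ (p : ℤ) := ⟨π.im ^ 2, by rw [← h, norm_eq, hre]; ring⟩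
    have : 2 ∣ p := by exact_mod_cast h2
    omega

theorem p_eq_mul_conj {π : R} {p : ℕ} (h : π.norm = p) : (p : R) = π * star π := by
  have := Zsqrtd.norm_eq_mul_conj π
  rw [h] at this
  exact_mod_cast this

theorem norm_cast_eq (z : R) : ((z.norm : ℤ) : R) = z * star z := Zsqrtd.norm_eq_mul_conj z

theorem classify_pow {p : ℕ} (hp : p.Prime) (hp8 : p % 8 = 1 ∨ p % 8 = 3) {π : R}
    (hπ : π.norm = p) :
    ∀ (a : ℕ) (z : R), z.norm = (p ^ a : ℕ) →
      ∃ (i : ℕ) (u : R), (u = 1 ∨ u = -1) ∧ i ≤ a ∧ z = u * π ^ i * star π ^ (a - i) := by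
  have hprime := prime_of_norm_prime hp hπ
  intro a
  induction a with
  | zero =>
    intro z hz
    have : IsUnit z := (Zsqrtd.norm_eq_one_iff' (by norm_num) z).mp (by exact_mod_cast hz)
    exact ⟨0, z, isUnit_iff.mp this, le_refl _, by simp⟩
  | succ a ih =>
    intro z hz
    have hdvd : π ∣ z * star z := by
      rw [← norm_cast_eq, hz]
      refine dvd_trans ⟨star π, p_eq_mul_conj hπ⟩ ?_
      push_cast
      exact ⟨(p : R) ^ a, by ring⟩
    have hp0 : (p : ℤ) ≠ 0 := by exact_mod_cast hp.ne_zero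
    rcases hprime.2.2 _ _ hdvd with ⟨w, hw⟩ | ⟨w, hw⟩
    · have hnw : w.norm = (p ^ a : ℕ) := by
        have h2 : (π * w).norm = ((p ^ (a + 1) : ℕ) : ℤ) := by rw [← hw]; exact hz
        rw [Zsqrtd.norm_mul, hπ] at h2
        have : (p : ℤ) * w.norm = (p : ℤ) * ((p ^ a : ℕ) : ℤ) := by
          push_cast at h2 ⊢; rw [h2]; ring
        exact mul_left_cancel₀ hp0 this
      obtain ⟨i, u, hu, hia, hwu⟩ := ih w hnw
      refine ⟨i + 1, u, hu, by omega, ?_⟩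
      rw [hw, hwu]
      have : a + 1 - (i + 1) = a - i := by omega
      rw [this]; ring
    · have hzw : z = star π * star w := by
        rw [← star_star z, hw, star_mul']
      have hnw : (star w).norm = (p ^ a : ℕ) := by
        have h2 : (π * w).norm = ((p ^ (a + 1) : ℕ) : ℤ) := by
          rw [← hw, Zsqrtd.norm_conj]; exact hz
        rw [Zsqrtd.norm_mul, hπ] at h2
        rw [Zsqrtd.norm_conj]
        have : (p : ℤ) * w.norm = (p : ℤ) * ((p ^ a : ℕ) : ℤ) := by
          push_cast at h2 ⊢; rw [h2]; ring
        exact mul_left_cancel₀ hp0 this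
      obtain ⟨i, u, hu, hia, hwu⟩ := ih (star w) hnw
      refine ⟨i, u, hu, by omega, ?_⟩
      rw [hzw, hwu]
      have : a + 1 - i = (a - i) + 1 := by omega
      rw [this]; ring

theorem pi_ne_zero {π : R} {p : ℕ} (hp : p.Prime) (hπ : π.norm = p) : π ≠ 0 := by
  intro h
  rw [h, Zsqrtd.norm_zero] at hπ
  exact hp.ne_zero (by exact_mod_cast hπ.symm)

/-- Injectivity of the parametrization of `S (p^a)`. -/
theorem param_inj {p : ℕ} (hp : p.Prime) (hp8 : p % 8 = 1 ∨ p % 8 = 3) {π : R}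
    (hπ : π.norm = p) {a i j : ℕ} {u v : R} (hu : u = 1 ∨ u = -1) (hv : v = 1 ∨ v = -1)
    (hia : i ≤ a) (hja : j ≤ a)
    (heq : u * π ^ i * star π ^ (a - i) = v * π ^ j * star π ^ (a - j)) :
    i = j ∧ u = v := by
  have hprime := prime_of_norm_prime hp hπ
  have hne := pi_ne_zero hp hπ
  have hnes : star π ≠ 0 := fun h => hne (by rw [← star_star π, h, star_zero])
  -- first prove i = j by contradiction through a symmetric auxiliary argument
  have aux : ∀ (i j : ℕ) (u v : R), (u = 1 ∨ u = -1) → (v = 1 ∨ v = -1) → i ≤ a → j ≤ a →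
      i < j → u * π ^ i * star π ^ (a - i) = v * π ^ j * star π ^ (a - j) → False := by
    intro i j u v hu hv hia hja hij heq
    have h1 : π ^ i * (u * star π ^ (j - i) * star π ^ (a - j)) =
        π ^ i * (v * π ^ (j - i) * star π ^ (a - j)) := by
      have e1 : a - i = (j - i) + (a - j) := by omega
      have e2 : j = i + (j - i) := by omega
      calc π ^ i * (u * star π ^ (j - i) * star π ^ (a - j))
          = u * π ^ i * star π ^ ((j - i) + (a - j)) := by rw [pow_add]; ring
        _ = u * π ^ i * star π ^ (a - i) := by rw [← e1]
        _ = v * π ^ j * star π ^ (a - j) := heq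
        _ = v * π ^ (i + (j - i)) * star π ^ (a - j) := by rw [← e2]
        _ = π ^ i * (v * π ^ (j - i) * star π ^ (a - j)) := by rw [pow_add]; ring
    have h2 := mul_left_cancel₀ (pow_ne_zero i hne) h1
    have h3 := mul_right_cancel₀ (pow_ne_zero (a - j) hnes) h2
    -- h3 : u * star π ^ (j - i) = v * π ^ (j - i)
    have hdvd : π ∣ u * star π ^ (j - i) := by
      rw [h3]
      exact Dvd.dvd.mul_left (dvd_pow_self π (by omega : j - i ≠ 0)) v
    have hdvd2 : π ∣ star π ^ (j - i) := by
      rcases hu with rfl | rfl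
      · simpa using hdvd
      · have : π ∣ -(star π ^ (j - i)) := by simpa using hdvd
        exact (dvd_neg.mp this)
    exact not_dvd_conj hp hp8 hπ (hprime.dvd_of_dvd_pow hdvd2)
  rcases lt_trichotomy i j with h | h | h
  · exact absurd (aux i j u v hu hv hia hja h heq) (by simp)
  · refine ⟨h, ?_⟩
    subst h
    have := mul_right_cancel₀ (pow_ne_zero (a - i) hnes) heq
    exact mul_right_cancel₀ (pow_ne_zero i hne) this
  · exact absurd (aux j i v u hv hu hja hia h heq.symm) (by simp)

theorem f_split_pow {p : ℕ} (hp : p.Prime) (hp8 : p % 8 = 1 ∨ p % 8 = 3) {π : R}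
    (hπ : π.norm = p) (a : ℕ) : f (p ^ a) = 2 * (a + 1) := by
  have hprime := prime_of_norm_prime hp hπ
  have hne := pi_ne_zero hp hπ
  have hcard : Nat.card (Bool × Fin (a + 1)) = 2 * (a + 1) := by
    simp [Nat.card_eq_fintype_card]
  rw [f, ← hcard]
  apply Nat.card_congr
  apply Equiv.symm
  refine Equiv.ofBijective (fun si =>
    ⟨(if si.1 then 1 else -1) * π ^ (si.2 : ℕ) * star π ^ (a - (si.2 : ℕ)), ?_⟩) ⟨?_, ?_⟩
  · obtain ⟨s, i⟩ := si
    simp only [S, Set.mem_setOf_eq]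
    have h1 : Zsqrtd.norm (if s then 1 else -1 : R) = 1 := by
      cases s <;> simp [Zsqrtd.norm_neg, Zsqrtd.norm_one]
    rw [Zsqrtd.norm_mul, Zsqrtd.norm_mul, h1, norm_pow, norm_pow, Zsqrtd.norm_conj, hπ]
    have hile : (i : ℕ) ≤ a := by omega
    rw [one_mul, ← pow_add]
    have : (i : ℕ) + (a - (i : ℕ)) = a := by omega
    rw [this]
    push_cast
    ring
  · rintro ⟨s, i⟩ ⟨t, j⟩ h
    simp only [Subtype.mk.injEq] at h
    have hu : (if s then 1 else -1 : R) = 1 ∨ (if s then 1 else -1 : R) = -1 := by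
      cases s <;> simp
    have hv : (if t then 1 else -1 : R) = 1 ∨ (if t then 1 else -1 : R) = -1 := by
      cases t <;> simp
    obtain ⟨hij, huv⟩ := param_inj hp hp8 hπ hu hv (by omega) (by omega) h
    have hst : s = t := by
      cases s <;> cases t <;> simp_all
      · exact absurd huv (by decide)
      · exact absurd huv (by decide)
    refine Prod.ext hst (Fin.ext hij)
  · rintro ⟨z, hz⟩
    obtain ⟨i, u, hu, hia, hzu⟩ := classify_pow hp hp8 hπ a z hz
    refine ⟨⟨u = 1, ⟨i, by omega⟩⟩, ?_⟩
    simp only [Subtype.mk.injEq]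
    rw [hzu]
    rcases hu with rfl | rfl
    · simp
    · norm_num

/-- All prime factors are split primes. -/
def Split (m : ℕ) : Prop := ∀ q : ℕ, q.Prime → q ∣ m → q % 8 = 1 ∨ q % 8 = 3

theorem isCoprime_of_norm_coprime {a b : R} {m k : ℕ} (hm : a.norm = m) (hk : b.norm = k)
    (h : Nat.Coprime m k) : IsCoprime a b := by
  have hI : IsCoprime (m : ℤ) (k : ℤ) := Int.isCoprime_iff_gcd_eq_one.mpr (by
    rw [Int.gcd_natCast_natCast]; exact h)
  obtain ⟨u, v, huv⟩ := hI
  have ha : ((m : ℕ) : R) = a * star a := p_eq_mul_conj hm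
  have hb : ((k : ℕ) : R) = b * star b := p_eq_mul_conj hk
  refine ⟨(u : R) * star a, (v : R) * star b, ?_⟩
  calc (u : R) * star a * a + (v : R) * star b * b
      = (u : R) * ((m : ℕ) : R) + (v : R) * ((k : ℕ) : R) := by rw [ha, hb]; ring
    _ = ((u * m + v * k : ℤ) : R) := by push_cast; ring
    _ = 1 := by rw [huv]; simp

theorem eq_zero_of_eq_neg_self {x : R} (h : x = -x) : x = 0 := by
  have h1 := congrArg Zsqrtd.re h
  have h2 := congrArg Zsqrtd.im h
  simp only [Zsqrtd.re_neg, Zsqrtd.im_neg] at h1 h2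
  ext <;> simp <;> omega

theorem exists_factor : ∀ (m : ℕ), Split m → ∀ (k : ℕ) (z : R), Nat.Coprime m k →
    z.norm = (m * k : ℕ) → ∃ z1 z2 : R, z = z1 * z2 ∧ z1.norm = m ∧ z2.norm = k := by
  intro m
  induction m using Nat.strong_induction_on with
  | _ m ih =>
    intro hs k z hco hz
    rcases eq_or_ne m 0 with rfl | hm0
    · exact absurd (hs 5 (by norm_num) (dvd_zero 5)) (by norm_num)
    rcases eq_or_ne m 1 with rfl | hm1
    · exact ⟨1, z, by simp, Zsqrtd.norm_one, by simpa using hz⟩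
    have hp : (m.minFac).Prime := Nat.minFac_prime hm1
    set p := m.minFac with hpdef
    have hpm : p ∣ m := Nat.minFac_dvd m
    have hp8 := hs p hp hpm
    obtain ⟨π, hπ⟩ := exists_norm_prime hp hp8
    have hprime := prime_of_norm_prime hp hπ
    have hp0 : (p : ℤ) ≠ 0 := by exact_mod_cast hp.ne_zero
    obtain ⟨m', hm'⟩ := hpm
    have hdvd : π ∣ z * star z := by
      rw [← norm_cast_eq, hz, Int.cast_natCast]
      exact dvd_trans ⟨star π, p_eq_mul_conj hπ⟩
        (Nat.cast_dvd_cast (Dvd.intro m' hm'.symm |>.mul_right k))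
    have hm'_lt : m' < m := by
      have h1 := hp.one_lt
      have h2 : 2 * m' ≤ m := by
        calc 2 * m' ≤ p * m' := Nat.mul_le_mul_right _ h1
          _ = m := hm'.symm
      have h3 : m' ≠ m := by
        intro h; omega
      omega
    have hm'_split : Split m' := fun q hq hqd => hs q hq (hqd.trans ⟨p, by rw [hm']; ring⟩)
    have hm'_co : m'.Coprime k := Nat.Coprime.coprime_dvd_left ⟨p, by rw [hm']; ring⟩ hco
    rcases hprime.2.2 _ _ hdvd with ⟨w, hw⟩ | ⟨w, hw⟩
    · have hnw : w.norm = ((m' * k : ℕ) : ℤ) := by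
        have h2 : (π * w).norm = ((m * k : ℕ) : ℤ) := by rw [← hw]; exact hz
        rw [Zsqrtd.norm_mul, hπ] at h2
        refine mul_left_cancel₀ hp0 ?_
        rw [h2, hm']; push_cast; ring
      obtain ⟨w1, w2, hww, hw1, hw2⟩ := ih m' hm'_lt hm'_split k w hm'_co hnw
      refine ⟨π * w1, w2, by rw [hw, hww]; ring, ?_, hw2⟩
      rw [Zsqrtd.norm_mul, hπ, hw1, hm']; push_cast; ring
    · have hzw : z = star π * star w := by
        conv_lhs => rw [← star_star z]
        rw [hw, star_mul']
      have hnw : (star w).norm = ((m' * k : ℕ) : ℤ) := by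
        have h2 : (π * w).norm = ((m * k : ℕ) : ℤ) := by
          rw [← hw, Zsqrtd.norm_conj]; exact hz
        rw [Zsqrtd.norm_mul, hπ] at h2
        rw [Zsqrtd.norm_conj]
        refine mul_left_cancel₀ hp0 ?_
        rw [h2, hm']; push_cast; ring
      obtain ⟨w1, w2, hww, hw1, hw2⟩ := ih m' hm'_lt hm'_split k (star w) hm'_co hnw
      refine ⟨star π * w1, w2, by rw [hzw, hww]; ring, ?_, hw2⟩
      rw [Zsqrtd.norm_mul, Zsqrtd.norm_conj, hπ, hw1, hm']; push_cast; ring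

theorem factor_unique {m k : ℕ} (hco : m.Coprime k) (hm0 : m ≠ 0) {z1 z2 w1 w2 : R}
    (h1 : z1.norm = m) (h2 : z2.norm = k) (h3 : w1.norm = m) (h4 : w2.norm = k)
    (heq : z1 * z2 = w1 * w2) : (w1 = z1 ∧ w2 = z2) ∨ (w1 = -z1 ∧ w2 = -z2) := by
  have hz1ne : z1 ≠ 0 := by
    intro h
    rw [h, Zsqrtd.norm_zero] at h1
    exact hm0 (by exact_mod_cast h1.symm)
  have hc1 : IsCoprime z1 w2 := isCoprime_of_norm_coprime h1 h4 hco
  have hc2 : IsCoprime w1 z2 := isCoprime_of_norm_coprime h3 h2 hco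
  have hd1 : z1 ∣ w1 := hc1.dvd_of_dvd_mul_right ⟨z2, heq.symm⟩
  have hd2 : w1 ∣ z1 := hc2.dvd_of_dvd_mul_right ⟨w2, heq⟩
  obtain ⟨u, hu⟩ := associated_of_dvd_dvd hd1 hd2
  rcases isUnit_iff.mp u.isUnit with huu | huu
  · left
    rw [huu, mul_one] at hu
    refine ⟨hu.symm, ?_⟩
    rw [← hu] at heq
    exact (mul_left_cancel₀ hz1ne heq).symm
  · right
    rw [huu, mul_neg_one] at hu
    refine ⟨hu.symm, ?_⟩
    rw [← hu] at heq
    have h5 : z1 * z2 = z1 * (-w2) := by rw [heq]; ring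
    have := mul_left_cancel₀ hz1ne h5
    rw [this]; ring

theorem two_mul_f {m k : ℕ} (hm : m ≠ 0) (hs : Split m) (hco : m.Coprime k) :
    2 * f (m * k) = f m * f k := by
  classical
  have hfact : ∀ w : ↥(S (m * k)), ∃ zz : R × R,
      (w : R) = zz.1 * zz.2 ∧ zz.1.norm = m ∧ zz.2.norm = k := by
    rintro ⟨w, hw⟩
    obtain ⟨z1, z2, h⟩ := exists_factor m hs k w hco hw
    exact ⟨(z1, z2), h⟩
  choose sec hsec1 hsec2 hsec3 using hfact
  have hcard : Nat.card (Bool × ↥(S (m * k))) = 2 * f (m * k) := by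
    rw [Nat.card_prod, Nat.card_eq_fintype_card, Fintype.card_bool]; rfl
  rw [← hcard]
  have hcard2 : f m * f k = Nat.card (↥(S m) × ↥(S k)) := by
    rw [Nat.card_prod]; rfl
  rw [hcard2]
  apply Nat.card_congr
  have hmem1 : ∀ (s : Bool) (w : ↥(S (m * k))),
      ((if s then 1 else -1) * (sec w).1 : R) ∈ S m := by
    intro s w
    simp only [S, Set.mem_setOf_eq]
    rw [Zsqrtd.norm_mul]
    cases s <;> simp [Zsqrtd.norm_neg, Zsqrtd.norm_one, hsec2 w]
  have hmem2 : ∀ (s : Bool) (w : ↥(S (m * k))),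
      ((if s then 1 else -1) * (sec w).2 : R) ∈ S k := by
    intro s w
    simp only [S, Set.mem_setOf_eq]
    rw [Zsqrtd.norm_mul]
    cases s <;> simp [Zsqrtd.norm_neg, Zsqrtd.norm_one, hsec3 w]
  have hprodw : ∀ (s : Bool) (w : ↥(S (m * k))),
      ((if s then 1 else -1) * (sec w).1 : R) * ((if s then 1 else -1) * (sec w).2)
        = (w : R) := by
    intro s w
    cases s <;> simp only [if_true, if_false, Bool.false_eq_true] <;>
      linear_combination -hsec1 w
  have hsec1ne : ∀ w : ↥(S (m * k)), (sec w).1 ≠ 0 := by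
    intro w h
    have := hsec2 w
    rw [h, Zsqrtd.norm_zero] at this
    exact hm (by exact_mod_cast this.symm)
  refine Equiv.ofBijective (fun sw =>
    (⟨_, hmem1 sw.1 sw.2⟩, ⟨_, hmem2 sw.1 sw.2⟩)) ⟨?_, ?_⟩
  · rintro ⟨s, w⟩ ⟨t, w'⟩ h
    simp only [Prod.mk.injEq, Subtype.mk.injEq] at h
    obtain ⟨hA, hB⟩ := h
    have hww' : w = w' := by
      have : (w : R) = (w' : R) := by
        rw [← hprodw s w, ← hprodw t w', hA, hB]
      exact Subtype.ext this
    subst hww'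
    have hst : s = t := by
      by_contra hne
      have h1 : (if s then 1 else -1 : R) = - (if t then 1 else -1 : R) := by
        cases s <;> cases t <;> first | (exact absurd rfl hne) | norm_num
      rw [h1] at hA
      have h2 : ((if t then 1 else -1 : R) * (sec w).1)
          = -((if t then 1 else -1 : R) * (sec w).1) := by linear_combination -hA
      have h3 := eq_zero_of_eq_neg_self h2
      rcases mul_eq_zero.mp h3 with h4 | h4
      · cases t <;> norm_num at h4
      · exact hsec1ne w h4
    exact Prod.ext hst rfl
  · rintro ⟨⟨a, ha⟩, ⟨b, hb⟩⟩
    have hab : (a * b : R) ∈ S (m * k) := by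
      simp only [S, Set.mem_setOf_eq] at ha hb ⊢
      rw [Zsqrtd.norm_mul, ha, hb]; push_cast; ring
    set w : ↥(S (m * k)) := ⟨a * b, hab⟩ with hwdef
    have huniq := factor_unique hco hm (hsec2 w) (hsec3 w) ha hb
      (by rw [← hsec1 w])
    rcases huniq with ⟨hA, hB⟩ | ⟨hA, hB⟩
    · refine ⟨(true, w), ?_⟩
      simp only [Prod.mk.injEq, Subtype.mk.injEq]
      constructor <;> simp [hA, hB]
    · refine ⟨(false, w), ?_⟩
      simp only [Prod.mk.injEq, Subtype.mk.injEq]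
      constructor <;> simp [hA, hB]

theorem chi_mod (n : ℕ) : chiNeg2 n = chiNeg2 (n % 8) := by
  have h : n % 8 % 8 = n % 8 := Nat.mod_mod_of_dvd n dvd_rfl
  unfold chiNeg2
  rw [h]

theorem chi_mul (a b : ℕ) : chiNeg2 (a * b) = chiNeg2 a * chiNeg2 b := by
  have key : ∀ r < 8, ∀ s < 8, chiNeg2 (r * s) = chiNeg2 r * chiNeg2 s := by decide
  calc chiNeg2 (a * b) = chiNeg2 (a * b % 8) := chi_mod _
    _ = chiNeg2 (a % 8 * (b % 8) % 8) := by rw [Nat.mul_mod]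
    _ = chiNeg2 (a % 8 * (b % 8)) := (chi_mod _).symm
    _ = chiNeg2 (a % 8) * chiNeg2 (b % 8) :=
        key _ (Nat.mod_lt _ (by norm_num)) _ (Nat.mod_lt _ (by norm_num))
    _ = chiNeg2 a * chiNeg2 b := by rw [← chi_mod, ← chi_mod]

theorem chi_pow (p i : ℕ) : chiNeg2 (p ^ i) = chiNeg2 p ^ i := by
  induction i with
  | zero => simp [chiNeg2]
  | succ k ih => rw [pow_succ, chi_mul, ih, pow_succ]

open ArithmeticFunction in
noncomputable def chiA : ArithmeticFunction ℤ := ⟨fun n => chiNeg2 n, by decide⟩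

theorem chiA_mult : chiA.IsMultiplicative :=
  ⟨by decide, fun {m n} _ => chi_mul m n⟩

/-- The divisor sum of the character. -/
noncomputable def G (n : ℕ) : ℤ := ∑ d ∈ n.divisors, chiNeg2 d

open ArithmeticFunction ArithmeticFunction.zeta in
theorem G_eq (n : ℕ) : G n = ((ζ : ArithmeticFunction ℤ) * chiA) n := by
  rw [coe_zeta_mul_apply]
  rfl

open ArithmeticFunction ArithmeticFunction.zeta in
theorem G_mult {m n : ℕ} (h : m.Coprime n) : G (m * n) = G m * G n := by
  rw [G_eq, G_eq, G_eq]
  exact (isMultiplicative_zeta.natCast.mul chiA_mult).map_mul_of_coprime h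

theorem G_one : G 1 = 1 := by
  rw [G]
  simp [chiNeg2]

theorem G_pow {p : ℕ} (hp : p.Prime) (a : ℕ) :
    G (p ^ a) = ∑ i ∈ Finset.range (a + 1), chiNeg2 p ^ i := by
  rw [G, Nat.sum_divisors_prime_pow hp]
  exact Finset.sum_congr rfl fun i _ => chi_pow p i

theorem G_split_pow {p : ℕ} (hp : p.Prime) (hp8 : p % 8 = 1 ∨ p % 8 = 3) (a : ℕ) :
    G (p ^ a) = a + 1 := by
  have h1 : chiNeg2 p = 1 := by unfold chiNeg2; rw [if_pos hp8]
  rw [G_pow hp, h1]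
  simp

theorem G_inert_pow {p : ℕ} (hp : p.Prime) (hp8 : p % 8 = 5 ∨ p % 8 = 7) (a : ℕ) :
    G (p ^ a) = if Even (a + 1) then 0 else 1 := by
  have h1 : chiNeg2 p = -1 := by
    unfold chiNeg2
    rw [if_neg (by omega), if_pos hp8]
  rw [G_pow hp, h1, neg_one_geom_sum]

theorem chi_even {d : ℕ} (h : 2 ∣ d) : chiNeg2 d = 0 := by
  unfold chiNeg2
  rw [if_neg (by omega), if_neg (by omega)]

theorem G_two_mul {m : ℕ} (hm : m ≠ 0) : G (2 * m) = G m := by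
  have key : ∀ N : ℕ, N ≠ 0 → ∑ d ∈ N.divisors, chiNeg2 d
      = ∑ d ∈ N.divisors.filter (fun d => ¬ 2 ∣ d), chiNeg2 d := by
    intro N hN
    rw [Finset.sum_filter_of_ne]
    intro d _ hd
    intro h2
    exact hd (chi_even h2)
  rw [G, G, key _ (by omega), key _ hm]
  apply Finset.sum_congr _ (fun _ _ => rfl)
  ext d
  simp only [Finset.mem_filter, Nat.mem_divisors]
  constructor
  · rintro ⟨⟨hd, _⟩, hodd⟩
    refine ⟨⟨?_, hm⟩, hodd⟩
    have hco : d.Coprime 2 := Nat.coprime_two_right.mpr (Nat.odd_iff.mpr (by omega))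
    exact (Nat.Coprime.dvd_of_dvd_mul_left hco hd)
  · rintro ⟨⟨hd, _⟩, hodd⟩
    exact ⟨⟨hd.mul_left 2, by omega⟩, hodd⟩

theorem G_eq_zero_inert {p n : ℕ} (hp : p.Prime) (hp8 : p % 8 = 5 ∨ p % 8 = 7)
    (hn0 : n ≠ 0) (hpn : p ∣ n) (hsq : ¬ p ^ 2 ∣ n) : G n = 0 := by
  set a := n.factorization p with ha
  have ha1 : 1 ≤ a := hp.factorization_pos_of_dvd hn0 hpn
  have ha2 : a < 2 := by
    by_contra h
    push_neg at h
    exact hsq (dvd_trans (pow_dvd_pow p h) (Nat.ordProj_dvd n p))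
  have haa : a = 1 := by omega
  have hnat : p ^ a * (n / p ^ a) = n := Nat.ordProj_mul_ordCompl_eq_self n p
  have hco : (p ^ a).Coprime (n / p ^ a) :=
    Nat.Coprime.pow_left _ (Nat.coprime_ordCompl hp hn0)
  rw [← hnat, G_mult hco, G_inert_pow hp hp8, haa]
  norm_num

theorem G_inert_sq {p m : ℕ} (hp : p.Prime) (hp8 : p % 8 = 5 ∨ p % 8 = 7)
    (hm0 : m ≠ 0) : G (p ^ 2 * m) = G m := by
  set b := m.factorization p with hb
  set t := m / p ^ b with htdef
  have hnat : p ^ b * t = m := Nat.ordProj_mul_ordCompl_eq_self m p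
  have hcop : p.Coprime t := Nat.coprime_ordCompl hp hm0
  have h1 : p ^ 2 * m = p ^ (2 + b) * t := by rw [← hnat]; ring
  rw [h1, G_mult (Nat.Coprime.pow_left _ hcop), G_inert_pow hp hp8]
  conv_rhs => rw [← hnat]
  rw [G_mult (Nat.Coprime.pow_left _ hcop), G_inert_pow hp hp8]
  have hEv : Even (2 + b + 1) ↔ Even (b + 1) := by
    simp [Nat.even_iff]
    omega
  congr 1
  simp only [hEv]

theorem main : ∀ n : ℕ, 0 < n → (f n : ℤ) = 2 * G n := by
  intro n
  induction n using Nat.strong_induction_on with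
  | _ n ih =>
    intro hn
    rcases eq_or_ne n 1 with rfl | hn1
    · rw [f_one, G_one]; norm_num
    by_cases h2 : 2 ∣ n
    · obtain ⟨m, rfl⟩ := h2
      have hm0 : 0 < m := by omega
      rw [f_two_mul, G_two_mul (by omega)]
      exact ih m (by omega) hm0
    by_cases hie : ∃ p, p.Prime ∧ (p % 8 = 5 ∨ p % 8 = 7) ∧ p ∣ n
    · obtain ⟨p, hp, hp8, hpn⟩ := hie
      have hp1 := hp.one_lt
      by_cases hsq : p ^ 2 ∣ n
      · obtain ⟨m, hm⟩ := hsq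
        have hm0 : m ≠ 0 := by rintro rfl; omega
        have hmlt : m < n := by
          have h4 : 4 ≤ p ^ 2 := by nlinarith [hp.two_le]
          have h5 : 4 * m ≤ p ^ 2 * m := Nat.mul_le_mul_right m h4
          omega
        rw [hm, f_inert_sq hp hp8 m, G_inert_sq hp hp8 hm0]
        exact ih m hmlt (Nat.pos_of_ne_zero hm0)
      · have hSe : S n = ∅ := S_empty_of_inert hp hp8 hpn hsq
        have hf0 : f n = 0 := by rw [f, hSe]; simp
        rw [hf0, G_eq_zero_inert hp hp8 (by omega) hpn hsq]
        norm_num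
    · push_neg at hie
      have hsplit : Split n := by
        intro q hq hqd
        have hq2 : q ≠ 2 := by rintro rfl; exact h2 hqd
        have hqodd : q % 2 = 1 := Nat.odd_iff.mp (hq.odd_of_ne_two hq2)
        have h57 : ¬(q % 8 = 5 ∨ q % 8 = 7) := fun h => hie q hq h hqd
        omega
      set p := n.minFac with hpdef
      have hp : p.Prime := Nat.minFac_prime hn1
      have hpn : p ∣ n := Nat.minFac_dvd n
      have hn0 : n ≠ 0 := by omega
      set a := n.factorization p with ha
      set t := n / p ^ a with ht
      have hnat : p ^ a * t = n := Nat.ordProj_mul_ordCompl_eq_self n p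
      have hco : (p ^ a).Coprime t := Nat.Coprime.pow_left _ (Nat.coprime_ordCompl hp hn0)
      have ha1 : 1 ≤ a := hp.factorization_pos_of_dvd hn0 hpn
      have hp8 := hsplit p hp hpn
      obtain ⟨π, hπ⟩ := exists_norm_prime hp hp8
      have hsa : Split (p ^ a) := fun q hq hqd => by
        have hqp : q = p := (Nat.prime_dvd_prime_iff_eq hq hp).mp (hq.dvd_of_dvd_pow hqd)
        rw [hqp]; exact hp8
      have htpos : 0 < t := Nat.ordCompl_pos p hn0
      have htlt : t < n := by
        have h1 : 2 ≤ p ^ a := le_trans hp.two_le (Nat.le_self_pow (by omega) p)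
        nlinarith [htpos]
      have hft := ih t htlt htpos
      have h2f := two_mul_f (pow_ne_zero a hp.ne_zero) hsa hco
      rw [hnat] at h2f
      have hfp := f_split_pow hp hp8 hπ a
      have key : (2 : ℤ) * (f n : ℤ) = 2 * (2 * G n) := by
        have hcast : (2 : ℤ) * (f n : ℤ) = ((f (p ^ a) : ℕ) : ℤ) * ((f t : ℕ) : ℤ) := by
          exact_mod_cast h2f
        have hGn : G n = (a + 1 : ℤ) * G t := by
          rw [← hnat, G_mult hco, G_split_pow hp hp8 a]
        rw [hcast, hfp, hft, hGn]
        push_cast; ring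
      exact mul_left_cancel₀ two_ne_zero key

end Zm2

/-- The number of integer pairs `(x, y)` with `x² + 2y² = n` equals
`2 · ∑_{d ∣ n} (-2/d)`. -/
theorem stmt_0 (n : ℕ) (hn : 0 < n) :
    ({p : ℤ × ℤ | p.1 ^ 2 + 2 * p.2 ^ 2 = (n : ℤ)}.ncard : ℤ) =
      2 * ∑ d ∈ n.divisors, chiNeg2 d := by
  have hmain := Zm2.main n hn
  have hG : Zm2.G n = ∑ d ∈ n.divisors, chiNeg2 d := rfl
  have hcard : ({p : ℤ × ℤ | p.1 ^ 2 + 2 * p.2 ^ 2 = (n : ℤ)}.ncard) = Zm2.f n := by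
    rw [Zm2.f, ← Nat.card_coe_set_eq]
    refine Nat.card_congr ⟨fun q => ⟨⟨q.val.1, q.val.2⟩, ?_⟩,
      fun z => ⟨((z : Zsqrtd (-2)).re, (z : Zsqrtd (-2)).im), ?_⟩, ?_, ?_⟩
    · have hq := q.prop
      simp only [Set.mem_setOf_eq] at hq
      simp only [Zm2.S, Set.mem_setOf_eq, Zm2.norm_eq]
      exact hq
    · have hz := z.prop
      simp only [Zm2.S, Set.mem_setOf_eq, Zm2.norm_eq] at hz
      simp only [Set.mem_setOf_eq]
      exact hz
    · intro q
      rfl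
    · intro z
      rfl
  rw [hcard, hmain, hG]
end

section
/- For every positive integer n, the number of integer pairs (x,y) with x² + 2y² = n is nonzero if and only if in the prime factorization of n every prime p ≡ 5, 7 (mod 8) occurs to an even power; equivalently, 2·∑_{d|n}(−2/d) > 0 iff ∑_{d|n}(−2/d) ≠ 0. -/
open Zsqrtd

local notation "R2" => Zsqrtd (-2)

namespace MyZ2

theorem norm_def (z : R2) : z.norm = z.re ^ 2 + 2 * z.im ^ 2 := by
  simp [Zsqrtd.norm]; ring

theorem norm_nonneg' (z : R2) : 0 ≤ z.norm := Zsqrtd.norm_nonneg (by norm_num) z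

theorem norm_eq_zero' {z : R2} : z.norm = 0 ↔ z = 0 := by
  rw [norm_def]
  constructor
  · intro h
    have h1 : z.re = 0 ∧ z.im = 0 := by constructor <;> nlinarith [sq_nonneg z.re, sq_nonneg z.im]
    exact Zsqrtd.ext_iff.2 h1
  · rintro rfl; simp

noncomputable instance : Div R2 :=
  ⟨fun x y => ⟨round (((x * star y).re : ℚ) / (y.norm : ℚ)),
    round (((x * star y).im : ℚ) / (y.norm : ℚ))⟩⟩

theorem div_def (x y : R2) : x / y = ⟨round (((x * star y).re : ℚ) / (y.norm : ℚ)),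
    round (((x * star y).im : ℚ) / (y.norm : ℚ))⟩ := rfl

noncomputable instance : Mod R2 := ⟨fun x y => x - y * (x / y)⟩

theorem mod_def (x y : R2) : x % y = x - y * (x / y) := rfl

theorem round_bound (N u : ℤ) (hN : 0 < N) :
    |(u:ℚ) - (N:ℚ) * (round ((u:ℚ)/(N:ℚ)) : ℤ)| ≤ (N:ℚ)/2 := by
  have h := abs_sub_round ((u:ℚ)/(N:ℚ))
  have hNQ : (0:ℚ) < N := by exact_mod_cast hN
  have he : (u:ℚ) - (N:ℚ) * (round ((u:ℚ)/(N:ℚ)) : ℤ)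
      = (N:ℚ) * ((u:ℚ)/(N:ℚ) - (round ((u:ℚ)/(N:ℚ)) : ℤ)) := by field_simp
  rw [he, abs_mul, abs_of_pos hNQ]
  nlinarith

theorem key (x y : R2) (hy : y ≠ 0) : (x % y).norm < y.norm := by
  have hN : 0 < y.norm := lt_of_le_of_ne (norm_nonneg' y) (fun h => hy (norm_eq_zero'.1 h.symm))
  have hNQ : (0:ℚ) < (y.norm : ℚ) := by exact_mod_cast hN
  set q : R2 := x / y with hq
  set u : ℤ := (x * star y).re with hu
  set v : ℤ := (x * star y).im with hv
  have hqre : q.re = round ((u:ℚ) / (y.norm : ℚ)) := rfl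
  have hqim : q.im = round ((v:ℚ) / (y.norm : ℚ)) := rfl
  have hb1 : |(u : ℚ) - (y.norm : ℚ) * (q.re : ℚ)| ≤ (y.norm : ℚ) / 2 := by
    rw [hqre]; exact round_bound _ _ hN
  have hb2 : |(v : ℚ) - (y.norm : ℚ) * (q.im : ℚ)| ≤ (y.norm : ℚ) / 2 := by
    rw [hqim]; exact round_bound _ _ hN
  -- algebraic identity
  have hid : (x % y).norm * y.norm = (u - y.norm * q.re)^2 + 2 * (v - y.norm * q.im)^2 := by
    have h1 : ((x % y) * star y).norm = (x % y).norm * y.norm := by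
      rw [Zsqrtd.norm_mul, Zsqrtd.norm_conj]
    have h2 : (x % y) * star y = ⟨u - y.norm * q.re, v - y.norm * q.im⟩ := by
      have hys : y * star y = (y.norm : R2) := (Zsqrtd.norm_eq_mul_conj y).symm
      rw [mod_def, sub_mul, mul_comm (y * q) (star y), ← mul_assoc, mul_comm (star y) y, hys]
      ext <;> simp [hu, hv, Zsqrtd.ext_iff]
    rw [← h1, h2, norm_def]
  -- now conclude over ℚ
  have hQ : ((x % y).norm : ℚ) * (y.norm : ℚ) < (y.norm : ℚ) * (y.norm : ℚ) := by
    have : ((x % y).norm : ℚ) * (y.norm : ℚ)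
        = ((u:ℚ) - (y.norm:ℚ) * q.re)^2 + 2 * ((v:ℚ) - (y.norm:ℚ) * q.im)^2 := by
      exact_mod_cast congrArg (fun t : ℤ => (t : ℚ)) hid
    rw [this]
    have s1 := sq_abs ((u : ℚ) - (y.norm : ℚ) * (q.re : ℚ))
    have s2 := sq_abs ((v : ℚ) - (y.norm : ℚ) * (q.im : ℚ))
    nlinarith [abs_nonneg ((u : ℚ) - (y.norm : ℚ) * (q.re : ℚ)),
      abs_nonneg ((v : ℚ) - (y.norm : ℚ) * (q.im : ℚ))]
  have := lt_of_mul_lt_mul_right hQ hNQ.le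
  exact_mod_cast this

end MyZ2

namespace MyZ2

open Zsqrtd

theorem natAbs_norm_mod_lt (x y : R2) (hy : y ≠ 0) :
    (x % y).norm.natAbs < y.norm.natAbs := by
  have := key x y hy
  have h1 := norm_nonneg' (x % y)
  have h2 := norm_nonneg' y
  omega

noncomputable instance : EuclideanDomain R2 :=
  { Zsqrtd.commRing, (by infer_instance : Nontrivial R2) with
    quotient := (· / ·)
    remainder := (· % ·)
    quotient_zero := fun a => by
      simp [div_def, Zsqrtd.ext_iff]
    quotient_mul_add_remainder_eq := fun a b => by
      change b * (a / b) + (a - b * (a / b)) = a; ring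
    r := fun a b => a.norm.natAbs < b.norm.natAbs
    r_wellFounded := (measure (fun z : R2 => z.norm.natAbs)).wf
    remainder_lt := fun a b hb => natAbs_norm_mod_lt a b hb
    mul_left_not_lt := fun a b hb0 => by
      simp only [not_lt, Zsqrtd.norm_mul, Int.natAbs_mul]
      have : 1 ≤ b.norm.natAbs := by
        have := norm_nonneg' b
        have hne : b.norm ≠ 0 := fun h => hb0 (norm_eq_zero'.1 h)
        omega
      exact Nat.le_mul_of_pos_right _ (by omega) }

theorem norm_natCast (n : ℕ) : ((n : R2)).norm = (n:ℤ) * (n:ℤ) := by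
  simp [Zsqrtd.norm]

theorem norm_natAbs_eq_one {z : R2} (h : IsUnit z) : z.norm = 1 := by
  have := Zsqrtd.norm_eq_one_iff.2 h
  have h2 := norm_nonneg' z
  omega

theorem prime_rep (p : ℕ) (hp : p.Prime) (c : ℤ) (hdvd : (p:ℤ) ∣ c^2 + 2) :
    ∃ a b : ℤ, a^2 + 2*b^2 = (p:ℤ) := by
  have hp2 : (2:ℤ) ≤ (p:ℤ) := by exact_mod_cast hp.two_le
  have hpu : ¬IsUnit (p : R2) := by
    intro h
    have := norm_natAbs_eq_one h
    rw [norm_natCast] at this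
    nlinarith
  have hpnz : (p : R2) ≠ 0 := by
    intro h
    have : (p : R2).re = 0 := by rw [h]; rfl
    simp at this
    omega
  have hnp : ¬ Prime (p : R2) := by
    intro hpr
    have hdvd2 : (p : R2) ∣ (⟨c, 1⟩ : R2) * ⟨c, -1⟩ := by
      obtain ⟨k, hk⟩ := hdvd
      refine ⟨(k : R2), ?_⟩
      have : (⟨c, 1⟩ : R2) * ⟨c, -1⟩ = ((c^2 + 2 : ℤ) : R2) := by
        ext <;> simp only [Zsqrtd.re_mul, Zsqrtd.im_mul, Zsqrtd.re_intCast, Zsqrtd.im_intCast] <;> ring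
      rw [this, hk]
      push_cast
      ring
    rcases hpr.2.2 _ _ hdvd2 with h | h
    · rcases (Zsqrtd.intCast_dvd (p:ℤ) _).1 (by exact_mod_cast h) with ⟨_, h2⟩
      have h2' : (p:ℤ) ∣ (1:ℤ) := h2
      have := Int.le_of_dvd one_pos h2'
      omega
    · rcases (Zsqrtd.intCast_dvd (p:ℤ) _).1 (by exact_mod_cast h) with ⟨_, h2⟩
      have h2' : (p:ℤ) ∣ (-1:ℤ) := h2
      rw [Int.dvd_neg] at h2'
      have := Int.le_of_dvd one_pos h2'
      omega
  have hnirr : ¬ Irreducible (p : R2) := fun h => hnp h.prime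
  rw [irreducible_iff] at hnirr
  push_neg at hnirr
  obtain ⟨a, b, hab, hau, hbu⟩ := hnirr hpu
  have hnorm : a.norm * b.norm = (p:ℤ) * (p:ℤ) := by
    rw [← Zsqrtd.norm_mul, ← hab, norm_natCast]
  have hA : a.norm.natAbs * b.norm.natAbs = p * p := by
    have := congrArg Int.natAbs hnorm
    rwa [Int.natAbs_mul, Int.natAbs_mul, Int.natAbs_natCast] at this
  have hAd : a.norm.natAbs ∣ p ^ 2 := ⟨b.norm.natAbs, by rw [pow_two, ← hA]⟩
  obtain ⟨k, hk, hke⟩ := (Nat.dvd_prime_pow hp).1 hAd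
  have hane : a.norm.natAbs ≠ 1 := by
    intro h1
    exact hau (Zsqrtd.norm_eq_one_iff.1 h1)
  have hbne : b.norm.natAbs ≠ 1 := by
    intro h1
    exact hbu (Zsqrtd.norm_eq_one_iff.1 h1)
  have hk1 : k = 1 := by
    interval_cases k
    · simp at hke; omega
    · rfl
    · exfalso
      rw [hke] at hA
      have h' : p * p * b.norm.natAbs = p * p * 1 := by rw [mul_one, ← pow_two, hA, pow_two]
      exact hbne (Nat.eq_of_mul_eq_mul_left (by have := hp.pos; positivity) h')
  rw [hk1, pow_one] at hke
  refine ⟨a.re, a.im, ?_⟩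
  rw [← norm_def]
  have : a.norm = (a.norm.natAbs : ℤ) := (Int.natAbs_of_nonneg (norm_nonneg' a)).symm
  rw [this, hke]

end MyZ2


namespace MyChi

theorem chi_zero : chiNeg2 0 = 0 := rfl

theorem chi_one : chiNeg2 1 = 1 := rfl

theorem chi_mod (m : ℕ) : chiNeg2 m = chiNeg2 (m % 8) := by
  have h : m % 8 % 8 = m % 8 := Nat.mod_mod_of_dvd m dvd_rfl
  unfold chiNeg2
  rw [h]

theorem chi_mul (m n : ℕ) : chiNeg2 (m * n) = chiNeg2 m * chiNeg2 n := by
  rw [chi_mod (m*n), chi_mod m, chi_mod n, Nat.mul_mod]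
  have hm : m % 8 < 8 := Nat.mod_lt _ (by norm_num)
  have hn : n % 8 < 8 := Nat.mod_lt _ (by norm_num)
  set a := m % 8
  set b := n % 8
  interval_cases a <;> interval_cases b <;> decide

theorem chi_pow (p k : ℕ) : chiNeg2 (p ^ k) = chiNeg2 p ^ k := by
  induction k with
  | zero => simp [chi_one]
  | succ k ih => rw [pow_succ, pow_succ, chi_mul, ih]

open ArithmeticFunction

/-- chiNeg2 as an arithmetic function -/
def chiAF : ArithmeticFunction ℤ := ⟨chiNeg2, chi_zero⟩

theorem chiAF_mult : chiAF.IsMultiplicative :=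
  ⟨chi_one, fun {_ _} _ => chi_mul _ _⟩

theorem chi_prime_vals (p : ℕ) (hp : p.Prime) :
    (p % 8 = 5 ∨ p % 8 = 7 → chiNeg2 p = -1) ∧
    ((¬(p % 8 = 5 ∨ p % 8 = 7)) → chiNeg2 p = 0 ∨ chiNeg2 p = 1) := by
  unfold chiNeg2
  constructor
  · intro h
    rcases h with h | h <;> simp [h]
  · intro h
    rcases Nat.lt_or_ge (p % 8) 8 with _ | h8
    · by_cases h13 : p % 8 = 1 ∨ p % 8 = 3
      · simp [h13]
      · simp [h13, h]
    · omega

theorem geom_sum_chi (p k : ℕ) (hp : p.Prime) :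
    (0 ≤ ∑ i ∈ Finset.range (k+1), chiNeg2 p ^ i) ∧
    ((∑ i ∈ Finset.range (k+1), chiNeg2 p ^ i) ≠ 0 ↔
      ((p % 8 = 5 ∨ p % 8 = 7) → Even k)) := by
  by_cases hbad : p % 8 = 5 ∨ p % 8 = 7
  · have hc : chiNeg2 p = -1 := (chi_prime_vals p hp).1 hbad
    rw [hc]
    have := neg_one_geom_sum (R := ℤ) (n := k+1)
    rw [this]
    by_cases hk : Even (k+1)
    · simp only [if_pos hk]
      have : ¬ Even k := by
        rcases hk with ⟨t, ht⟩; rintro ⟨s, hs⟩; omega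
      constructor
      · norm_num
      · simp [hbad, this]
    · simp only [if_neg hk]
      have : Even k := by
        rcases Nat.even_or_odd k with h | h
        · exact h
        · exfalso; exact hk (by rcases h with ⟨t,ht⟩; exact ⟨t+1, by omega⟩)
      constructor
      · norm_num
      · simp [this]
  · rcases (chi_prime_vals p hp).2 hbad with hc | hc
    · rw [hc]
      have : (∑ i ∈ Finset.range (k+1), (0:ℤ) ^ i) = 1 := by
        rw [Finset.sum_range_succ']
        simp [zero_pow_eq]
      rw [this]
      exact ⟨by norm_num, by simp [hbad]⟩
    · rw [hc]
      have : (∑ i ∈ Finset.range (k+1), (1:ℤ) ^ i) = k+1 := by simp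
      rw [this]
      constructor
      · positivity
      · constructor
        · intro _ h; exact absurd h hbad
        · intro _; positivity

/-- the divisor sum of chiNeg2 -/
theorem sum_chi_eq (n : ℕ) (hn : n ≠ 0) :
    ∑ d ∈ n.divisors, chiNeg2 d =
      n.factorization.prod fun p k => ∑ i ∈ Finset.range (k+1), chiNeg2 p ^ i := by
  have hzeta : (↑(ArithmeticFunction.zeta : ArithmeticFunction ℕ) * chiAF : ArithmeticFunction ℤ).IsMultiplicative :=
    (isMultiplicative_zeta.natCast).mul chiAF_mult
  have h1 : (↑(ArithmeticFunction.zeta : ArithmeticFunction ℕ) * chiAF : ArithmeticFunction ℤ) n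
      = ∑ d ∈ n.divisors, chiNeg2 d := coe_zeta_mul_apply
  rw [← h1, hzeta.multiplicative_factorization _ hn]
  apply Finsupp.prod_congr
  intro p hp
  have hpp : p.Prime := Nat.prime_of_mem_primeFactors (by simpa using hp)
  rw [coe_zeta_mul_apply]
  rw [Nat.sum_divisors_prime_pow hpp]
  apply Finset.sum_congr rfl
  intro i _
  exact chi_pow p i

theorem sum_chi_nonneg (n : ℕ) (hn : n ≠ 0) : 0 ≤ ∑ d ∈ n.divisors, chiNeg2 d := by
  rw [sum_chi_eq n hn, Finsupp.prod]
  apply Finset.prod_nonneg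
  intro p hp
  exact (geom_sum_chi p _ (Nat.prime_of_mem_primeFactors (by simpa using hp))).1

theorem sum_chi_ne_zero_iff (n : ℕ) (hn : n ≠ 0) :
    (∑ d ∈ n.divisors, chiNeg2 d) ≠ 0 ↔
      ∀ p : ℕ, p.Prime → (p % 8 = 5 ∨ p % 8 = 7) → Even (n.factorization p) := by
  rw [sum_chi_eq n hn, Finsupp.prod, Finset.prod_ne_zero_iff]
  constructor
  · intro h p hp hbad
    by_cases hps : p ∈ n.factorization.support
    · exact ((geom_sum_chi p _ (Nat.prime_of_mem_primeFactors (by simpa using hps))).2.1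
        (h p hps)) hbad
    · rw [Finsupp.notMem_support_iff.1 hps]; exact Even.zero
  · intro h p hps
    have hpp : p.Prime := Nat.prime_of_mem_primeFactors (by simpa using hps)
    exact (geom_sum_chi p _ hpp).2.2 (fun hbad => h p hpp hbad)

end MyChi



namespace MyRep

theorem rep_mul {a b : ℕ} (ha : ∃ x y : ℤ, x^2 + 2*y^2 = (a:ℤ))
    (hb : ∃ x y : ℤ, x^2 + 2*y^2 = (b:ℤ)) : ∃ x y : ℤ, x^2 + 2*y^2 = ((a*b : ℕ):ℤ) := by
  obtain ⟨x, y, hxy⟩ := ha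
  obtain ⟨u, v, huv⟩ := hb
  refine ⟨x*u - 2*y*v, x*v + y*u, ?_⟩
  push_cast
  rw [← hxy, ← huv]
  ring

theorem rep_prime (p : ℕ) (hp : p.Prime) (hgood : ¬(p % 8 = 5 ∨ p % 8 = 7)) :
    ∃ x y : ℤ, x^2 + 2*y^2 = (p:ℤ) := by
  by_cases hp2 : p = 2
  · exact ⟨0, 1, by rw [hp2]; norm_num⟩
  · have : Fact p.Prime := ⟨hp⟩
    have hodd : p % 2 = 1 := Nat.odd_iff.1 (hp.odd_of_ne_two hp2)
    have h13 : p % 8 = 1 ∨ p % 8 = 3 := by omega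
    have hsq : IsSquare (-2 : ZMod p) := (ZMod.exists_sq_eq_neg_two_iff hp2).2 h13
    obtain ⟨r, hr⟩ := hsq
    apply MyZ2.prime_rep p hp ((r.val : ℤ))
    rw [← ZMod.intCast_zmod_eq_zero_iff_dvd]
    push_cast
    rw [ZMod.natCast_val, ZMod.cast_id]
    linear_combination -hr

theorem rep_of_cond : ∀ n : ℕ, 0 < n →
    (∀ p : ℕ, p.Prime → (p % 8 = 5 ∨ p % 8 = 7) → Even (n.factorization p)) →
    ∃ x y : ℤ, x^2 + 2*y^2 = (n:ℤ) := by
  intro n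
  induction n using Nat.strong_induction_on with
  | _ n ih =>
  intro hn hcond
  rcases eq_or_lt_of_le (show 1 ≤ n from hn) with h1 | h1
  · exact ⟨1, 0, by rw [← h1]; norm_num⟩
  · set p := n.minFac with hpdef
    have hp : p.Prime := Nat.minFac_prime (by omega)
    have hpd : p ∣ n := Nat.minFac_dvd n
    have hp1 : 1 < p := hp.one_lt
    by_cases hbad : p % 8 = 5 ∨ p % 8 = 7
    · -- p^2 ∣ n
      have hk : 1 ≤ n.factorization p := by
        rw [← Nat.Prime.pow_dvd_iff_le_factorization hp (by omega), pow_one]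
        exact hpd
      have hk2 : 2 ≤ n.factorization p := by
        have he := hcond p hp hbad
        rcases he with ⟨t, ht⟩
        omega
      have hp2d : p^2 ∣ n := (Nat.Prime.pow_dvd_iff_le_factorization hp (by omega)).2 hk2
      obtain ⟨m, hm⟩ := hp2d
      have hm0 : 0 < m := by
        rcases Nat.eq_zero_or_pos m with h | h
        · rw [h, mul_zero] at hm; omega
        · exact h
      have hmlt : m < n := by
        have : p^2 > 1 := by nlinarith
        nlinarith
      have hcondm : ∀ q : ℕ, q.Prime → (q % 8 = 5 ∨ q % 8 = 7) → Even (m.factorization q) := by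
        intro q hq hqbad
        have hfac : n.factorization = (p^2).factorization + m.factorization := by
          rw [hm, Nat.factorization_mul (pow_ne_zero 2 (by omega)) (by omega)]
        have := hcond q hq hqbad
        rw [hfac] at this
        rw [hp.factorization_pow] at this
        by_cases hqp : q = p
        · subst hqp
          simp only [Finsupp.add_apply, Finsupp.single_eq_same] at this
          rcases this with ⟨t, ht⟩
          exact ⟨t - 1, by omega⟩
        · simpa [Finsupp.single_apply, Ne.symm hqp] using this
      obtain ⟨x, y, hxy⟩ := ih m hmlt hm0 hcondm
      refine ⟨p*x, p*y, ?_⟩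
      rw [hm]
      push_cast
      rw [← hxy]
      ring
    · -- p representable
      obtain ⟨m, hm⟩ := hpd
      have hm0 : 0 < m := by
        rcases Nat.eq_zero_or_pos m with h | h
        · rw [h, mul_zero] at hm; omega
        · exact h
      have hmlt : m < n := by nlinarith
      have hcondm : ∀ q : ℕ, q.Prime → (q % 8 = 5 ∨ q % 8 = 7) → Even (m.factorization q) := by
        intro q hq hqbad
        have hfac : n.factorization = p.factorization + m.factorization := by
          rw [hm, Nat.factorization_mul (by omega) (by omega)]
        have := hcond q hq hqbad
        rw [hfac, hp.factorization] at this
        by_cases hqp : q = p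
        · exact absurd (hqp ▸ hqbad) hbad
        · simpa [Finsupp.single_apply, Ne.symm hqp] using this
      have := rep_mul (rep_prime p hp hbad) (ih m hmlt hm0 hcondm)
      rw [← hm] at this
      exact this

theorem cond_of_rep : ∀ n : ℕ, 0 < n → (∃ x y : ℤ, x^2 + 2*y^2 = (n:ℤ)) →
    ∀ p : ℕ, p.Prime → (p % 8 = 5 ∨ p % 8 = 7) → Even (n.factorization p) := by
  intro n
  induction n using Nat.strong_induction_on with
  | _ n ih =>
  rintro hn ⟨x, y, hxy⟩ p hp hbad
  have hfp : Fact p.Prime := ⟨hp⟩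
  have hp2 : p ≠ 2 := by
    intro h; rw [h] at hbad; omega
  by_cases hpd : p ∣ n
  · -- p ∣ x and p ∣ y
    have hzm : (x : ZMod p)^2 + 2*(y : ZMod p)^2 = 0 := by
      have : ((x^2 + 2*y^2 : ℤ) : ZMod p) = ((n:ℤ) : ZMod p) := by rw [hxy]
      have hn0 : ((n:ℤ) : ZMod p) = 0 := by
        rw [ZMod.intCast_zmod_eq_zero_iff_dvd]
        exact_mod_cast hpd
      rw [hn0] at this
      push_cast at this
      convert this using 1 <;> push_cast <;> ring
    have hy : (y : ZMod p) = 0 := by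
      by_contra hy0
      have hsq : IsSquare (-2 : ZMod p) := by
        refine ⟨x * (y : ZMod p)⁻¹, ?_⟩
        have h2 : ((y:ZMod p) * (y:ZMod p)⁻¹) = 1 := ZMod.mul_inv_of_unit _ (Ne.isUnit hy0)
        field_simp
        linear_combination -hzm
      rw [ZMod.exists_sq_eq_neg_two_iff hp2] at hsq
      omega
    have hx : (x : ZMod p) = 0 := by
      have : (x : ZMod p)^2 = 0 := by
        rw [hy] at hzm
        simpa using hzm
      exact pow_eq_zero_iff (n := 2) (by norm_num) |>.1 this -- may fail
    obtain ⟨x', hx'⟩ := (ZMod.intCast_zmod_eq_zero_iff_dvd x p).1 hx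
    obtain ⟨y', hy'⟩ := (ZMod.intCast_zmod_eq_zero_iff_dvd y p).1 hy
    -- n = p^2 * m
    have hneq : (n : ℤ) = (p:ℤ)^2 * (x'^2 + 2*y'^2) := by
      rw [← hxy, hx', hy']; ring
    have hx2 : (0:ℤ) ≤ x'^2 + 2*y'^2 := by positivity
    obtain ⟨m, hm⟩ : ∃ m : ℕ, (m:ℤ) = x'^2 + 2*y'^2 := ⟨(x'^2 + 2*y'^2).toNat, Int.toNat_of_nonneg hx2⟩
    have hnm : n = p^2 * m := by
      have : (n : ℤ) = ((p^2 * m : ℕ) : ℤ) := by push_cast; rw [hm, hneq]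
      exact_mod_cast this
    have hm0 : 0 < m := by
      rcases Nat.eq_zero_or_pos m with h | h
      · rw [h, mul_zero] at hnm; omega
      · exact h
    have hmlt : m < n := by
      have hpg : 1 < p^2 := by nlinarith [hp.one_lt]
      nlinarith
    have hrec := ih m hmlt hm0 ⟨x', y', hm.symm⟩ p hp hbad
    have hfac : n.factorization p = m.factorization p + 2 := by
      rw [hnm, Nat.factorization_mul (pow_ne_zero 2 (by omega)) (by omega), hp.factorization_pow]
      simp [Finsupp.single_eq_same]
      ring
    rw [hfac]
    rcases hrec with ⟨t, ht⟩
    exact ⟨t+1, by omega⟩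
  · rw [Nat.factorization_eq_zero_of_not_dvd hpd]
    exact Even.zero

end MyRep


/-- Representability criterion for `x² + 2y²`: a positive integer `n` is
represented by `x² + 2y²` if and only if every prime `p ≡ 5, 7 (mod 8)` occurs
to an even power in `n`; equivalently, `2∑_{d∣n}(−2/d) > 0` iff
`∑_{d∣n}(−2/d) ≠ 0`. -/
theorem stmt_15 (n : ℕ) (hn : 0 < n) :
    (({p : ℤ × ℤ | p.1 ^ 2 + 2 * p.2 ^ 2 = (n : ℤ)}.ncard ≠ 0 ↔
        ∀ p : ℕ, p.Prime → (p % 8 = 5 ∨ p % 8 = 7) → Even (n.factorization p)) ∧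
      (0 < 2 * ∑ d ∈ n.divisors, chiNeg2 d ↔
        ∑ d ∈ n.divisors, chiNeg2 d ≠ 0)) := by
  have hfin : ({p : ℤ × ℤ | p.1 ^ 2 + 2 * p.2 ^ 2 = (n : ℤ)}).Finite := by
    apply Set.Finite.subset ((Set.finite_Icc (-(n:ℤ)) n).prod (Set.finite_Icc (-(n:ℤ)) n))
    rintro ⟨x, y⟩ hxy
    simp only [Set.mem_setOf_eq] at hxy
    have hn1 : (1:ℤ) ≤ n := by exact_mod_cast hn
    simp only [Set.mem_prod, Set.mem_Icc]
    refine ⟨⟨?_, ?_⟩, ?_, ?_⟩ <;>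
      nlinarith [sq_nonneg x, sq_nonneg y, sq_nonneg (x-1), sq_nonneg (x+1),
        sq_nonneg (y-1), sq_nonneg (y+1)]
  constructor
  · constructor
    · intro h
      have hne : {p : ℤ × ℤ | p.1 ^ 2 + 2 * p.2 ^ 2 = (n : ℤ)}.Nonempty := by
        rw [Set.nonempty_iff_ne_empty]
        intro he
        exact h (by rw [he]; simp)
      obtain ⟨⟨x, y⟩, hxy⟩ := hne
      exact MyRep.cond_of_rep n hn ⟨x, y, hxy⟩
    · intro h
      obtain ⟨x, y, hxy⟩ := MyRep.rep_of_cond n hn h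
      exact ((Set.ncard_pos hfin).2 ⟨(x, y), hxy⟩).ne'
  · have hS := MyChi.sum_chi_nonneg n hn.ne'
    constructor
    · intro h; omega
    · intro h; omega
end
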